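/- Let $0<a$ and let $f:[0,2a]\to\mathbb{R}$ be absolutely continuous (e.g. $f\in C^1([0,2a])$). Then $\int_0^a f(t)^2\,dt \le 4\int_a^{2a} f(t)^2\,dt + 4\int_0^{2a} t^2 f'(t)^2\,dt$. -/

import Mathlib

/-- Kondratiev–Oleinik 1D weighted estimate: for `f` absolutely continuous (here `C¹`)
on `[0, 2a]`, `∫_0^a f² ≤ 4 ∫_a^{2a} f² + 4 ∫_0^{2a} t² f'(t)² dt`. -/
theorem kondratiev_oleinik_weighted (a : ℝ) (ha : 0 < a) (f f' : ℝ → ℝ)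
    (hderiv : ∀ t ∈ Set.Icc (0 : ℝ) (2 * a), HasDerivAt f (f' t) t)
    (hcont : ContinuousOn f' (Set.Icc (0 : ℝ) (2 * a))) :
    (∫ t in (0 : ℝ)..a, f t ^ 2) ≤
      4 * (∫ t in a..(2 * a), f t ^ 2) + 4 * ∫ t in (0 : ℝ)..(2 * a), t ^ 2 * f' t ^ 2 := by
  have ha2 : (0:ℝ) ≤ 2 * a := by linarith
  have haa : a ≤ 2 * a := by linarith
  have hf : ContinuousOn f (Set.Icc (0 : ℝ) (2 * a)) :=
    fun t ht => (hderiv t ht).continuousAt.continuousWithinAt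
  have hsub1 : Set.uIcc (0:ℝ) a ⊆ Set.Icc (0:ℝ) (2*a) := by
    rw [Set.uIcc_of_le ha.le]; exact Set.Icc_subset_Icc le_rfl haa
  have hsub2 : Set.uIcc a (2*a) ⊆ Set.Icc (0:ℝ) (2*a) := by
    rw [Set.uIcc_of_le haa]; exact Set.Icc_subset_Icc ha.le le_rfl
  have hsub3 : Set.uIcc (0:ℝ) (2*a) ⊆ Set.Icc (0:ℝ) (2*a) := by
    rw [Set.uIcc_of_le ha2]
  -- continuity of basic integrands on the big interval
  have hcf2 : ContinuousOn (fun t => f t ^ 2) (Set.Icc (0:ℝ) (2*a)) := hf.pow 2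
  have hcw : ContinuousOn (fun t => t ^ 2 * f' t ^ 2) (Set.Icc (0:ℝ) (2*a)) :=
    ((continuous_id.pow 2).continuousOn).mul (hcont.pow 2)
  -- integrability
  have hif2_1 : IntervalIntegrable (fun t => f t ^ 2) MeasureTheory.volume 0 a :=
    (hcf2.mono hsub1).intervalIntegrable
  have hif2_2 : IntervalIntegrable (fun t => f t ^ 2) MeasureTheory.volume a (2*a) :=
    (hcf2.mono hsub2).intervalIntegrable
  have hiw_1 : IntervalIntegrable (fun t => t ^ 2 * f' t ^ 2) MeasureTheory.volume 0 a :=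
    (hcw.mono hsub1).intervalIntegrable
  have hiw_2 : IntervalIntegrable (fun t => t ^ 2 * f' t ^ 2) MeasureTheory.volume a (2*a) :=
    (hcw.mono hsub2).intervalIntegrable
  -- squared-derivative lemma
  have hsq : ∀ t ∈ Set.Icc (0:ℝ) (2*a), HasDerivAt (fun u => f u ^ 2) (2 * f t * f' t) t := by
    intro t ht
    have := (hderiv t ht).fun_pow 2
    simpa [mul_comm, mul_assoc] using this
  -- FTC on [0,a] for t * f t ^ 2
  have hA : (∫ t in (0:ℝ)..a, (f t ^ 2 + t * (2 * f t * f' t)))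
      = a * f a ^ 2 - 0 * f 0 ^ 2 := by
    apply intervalIntegral.integral_eq_sub_of_hasDerivAt
    · intro t ht
      have h1 := (hasDerivAt_id t).fun_mul (hsq t (hsub1 ht))
      simpa using h1
    · apply ContinuousOn.intervalIntegrable
      apply ContinuousOn.mono _ hsub1
      exact hcf2.add (((continuous_id.continuousOn).mul
        (((continuousOn_const.mul hf).mul hcont))))
  -- FTC on [a,2a] for (2a - t) * f t ^ 2
  have hC' : (∫ t in a..(2*a), (-(f t ^ 2) + (2*a - t) * (2 * f t * f' t)))
      = (fun t => (2*a - t) * f t ^ 2) (2*a) - (fun t => (2*a - t) * f t ^ 2) a := by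
    apply intervalIntegral.integral_eq_sub_of_hasDerivAt
      (f := fun t => (2*a - t) * f t ^ 2)
    · intro t ht
      have h1 := ((hasDerivAt_const t (2*a)).fun_sub (hasDerivAt_id t)).fun_mul (hsq t (hsub2 ht))
      have h2 : (0 - 1) * f t ^ 2 + (2*a - t) * (2 * f t * f' t)
          = -(f t ^ 2) + (2*a - t) * (2 * f t * f' t) := by ring
      rw [← h2]
      simpa using h1
    · apply ContinuousOn.intervalIntegrable
      apply ContinuousOn.mono _ hsub2
      exact (hcf2.neg).add (((continuousOn_const.sub continuous_id.continuousOn).mul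
        (((continuousOn_const.mul hf).mul hcont))))
  have hC : (∫ t in a..(2*a), (-(f t ^ 2) + (2*a - t) * (2 * f t * f' t)))
      = -(a * f a ^ 2) := by
    rw [hC']; ring
  -- pointwise bound on [0,a]
  have hB : (∫ t in (0:ℝ)..a, (f t ^ 2 / 2 - 2 * (t ^ 2 * f' t ^ 2)))
      ≤ ∫ t in (0:ℝ)..a, (f t ^ 2 + t * (2 * f t * f' t)) := by
    apply intervalIntegral.integral_mono_on ha.le
    · exact (hif2_1.div_const 2).sub (hiw_1.const_mul 2)
    · apply ContinuousOn.intervalIntegrable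
      apply ContinuousOn.mono _ hsub1
      exact hcf2.add (((continuous_id.continuousOn).mul
        (((continuousOn_const.mul hf).mul hcont))))
    · intro t ht
      nlinarith [sq_nonneg (f t + 2 * t * f' t)]
  -- pointwise bound on [a,2a]
  have hD : (∫ t in a..(2*a), ((-2) * f t ^ 2 - t ^ 2 * f' t ^ 2))
      ≤ ∫ t in a..(2*a), (-(f t ^ 2) + (2*a - t) * (2 * f t * f' t)) := by
    apply intervalIntegral.integral_mono_on haa
    · exact (hif2_2.const_mul (-2)).sub hiw_2
    · apply ContinuousOn.intervalIntegrable
      apply ContinuousOn.mono _ hsub2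
      exact (hcf2.neg).add (((continuousOn_const.sub continuous_id.continuousOn).mul
        (((continuousOn_const.mul hf).mul hcont))))
    · intro t ht
      obtain ⟨ht1, ht2⟩ := ht
      nlinarith [sq_nonneg (f t + (2*a - t) * f' t), sq_nonneg (f' t),
        mul_nonneg (mul_nonneg (by linarith : (0:ℝ) ≤ 2*t - 2*a) ha2) (sq_nonneg (f' t))]
  -- expand the LHS integrals
  have e1 : (∫ t in (0:ℝ)..a, (f t ^ 2 / 2 - 2 * (t ^ 2 * f' t ^ 2)))
      = (∫ t in (0:ℝ)..a, f t ^ 2) / 2 - 2 * ∫ t in (0:ℝ)..a, t ^ 2 * f' t ^ 2 := by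
    rw [intervalIntegral.integral_sub (hif2_1.div_const 2) (hiw_1.const_mul 2),
      intervalIntegral.integral_div, intervalIntegral.integral_const_mul]
  have e2 : (∫ t in a..(2*a), ((-2) * f t ^ 2 - t ^ 2 * f' t ^ 2))
      = (-2) * (∫ t in a..(2*a), f t ^ 2) - ∫ t in a..(2*a), t ^ 2 * f' t ^ 2 := by
    rw [intervalIntegral.integral_sub (hif2_2.const_mul (-2)) hiw_2,
      intervalIntegral.integral_const_mul]
  -- splitting the weighted integral
  have esplit : (∫ t in (0:ℝ)..a, t ^ 2 * f' t ^ 2) + (∫ t in a..(2*a), t ^ 2 * f' t ^ 2)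
      = ∫ t in (0:ℝ)..(2*a), t ^ 2 * f' t ^ 2 :=
    intervalIntegral.integral_add_adjacent_intervals hiw_1 hiw_2
  have hJ2 : (0:ℝ) ≤ ∫ t in a..(2*a), t ^ 2 * f' t ^ 2 := by
    apply intervalIntegral.integral_nonneg haa
    intro t ht
    positivity
  rw [e1] at hB
  rw [e2] at hD
  rw [hA] at hB
  rw [hC] at hD
  have hJ1 : (0:ℝ) ≤ ∫ t in (0:ℝ)..a, t ^ 2 * f' t ^ 2 := by
    apply intervalIntegral.integral_nonneg ha.le
    intro t ht
    positivity
  nlinarith [hB, hD, hJ2, esplit]
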